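/- If a path X : [0,T] → ℝ^d satisfies Property (RIE) relative to p ∈ (2,3) and partitions (P^n), and X^n is the piecewise constant discretization of X along P^n, then X^n satisfies Property (RIE) relative to p and any sequence of partitions (Q^m)_{m∈ℕ} with P^n ⊆ Q^m for every m and |Q^m| → 0 as m → ∞. -/

import Mathlib

open scoped ENNReal Classical
open Filter MeasureTheory ProbabilityTheory

noncomputable section

/-- The `p`-variation of a path `X` over `[0,T]`, as an extended nonnegative real:
`(sup over partitions of Σ ‖increment‖^p)^(1/p)`. -/
def epVar {E : Type*} [NormedAddCommGroup E] (X : ℝ → E) (p T : ℝ) : ℝ≥0∞ :=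
  (⨆ (n : ℕ) (t : ℕ → ℝ) (_ : Monotone t) (_ : t 0 = 0) (_ : t n = T),
    ∑ i ∈ Finset.range n, ENNReal.ofReal (‖X (t (i + 1)) - X (t i)‖ ^ p)) ^ (1 / p)

/-- The `r`-variation of a two-parameter function `A` over `[0,T]`. -/
def epVar2 {E : Type*} [NormedAddCommGroup E] (A : ℝ → ℝ → E) (r T : ℝ) : ℝ≥0∞ :=
  (⨆ (n : ℕ) (t : ℕ → ℝ) (_ : Monotone t) (_ : t 0 = 0) (_ : t n = T),
    ∑ i ∈ Finset.range n, ENNReal.ofReal (‖A (t i) (t (i + 1))‖ ^ r)) ^ (1 / r)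

/-- Piecewise constant approximation of `X` along the partition `t 0 ≤ t 1 ≤ ... ≤ t N`. -/
def pcApprox {E : Type*} (X : ℝ → E) (N : ℕ) (t : ℕ → ℝ) (s : ℝ) : E :=
  X (t (Nat.findGreatest (fun k => t k ≤ s) N))

/-- Tensor (outer) product of two Euclidean vectors, with the Frobenius (Euclidean) norm. -/
def tp2 {d e : ℕ} (v : EuclideanSpace ℝ (Fin d)) (w : EuclideanSpace ℝ (Fin e)) :
    EuclideanSpace ℝ (Fin d × Fin e) :=
  (WithLp.equiv 2 (Fin d × Fin e → ℝ)).symm (fun q => v q.1 * w q.2)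

def tp {d : ℕ} (v w : EuclideanSpace ℝ (Fin d)) : EuclideanSpace ℝ (Fin d × Fin d) :=
  tp2 v w

/-- Clamping of `x` into the interval `[s,u]`. -/
def clamp (s u x : ℝ) : ℝ := max s (min x u)

/-- The second-level lift `𝕏ⁿ_{s,u} = ∫_s^u (Xⁿ_r − Xⁿ_s) ⊗ dXⁿ_r` of a path `Xn` which is
piecewise constant along the partition `t`, written as a left-point Riemann-Stieltjes sum. -/
def pcLift {d : ℕ} (N : ℕ) (Xn : ℝ → EuclideanSpace ℝ (Fin d)) (t : ℕ → ℝ) (s u : ℝ) :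
    EuclideanSpace ℝ (Fin d × Fin d) :=
  ∑ i ∈ Finset.range N,
    tp (Xn (clamp s u (t i)) - Xn s) (Xn (clamp s u (t (i + 1))) - Xn (clamp s u (t i)))

/-- The left-point Riemann sum `∫_0^u Xⁿ_r ⊗ dX_r = Σ_k X_{t_k} ⊗ (X_{t_{k+1}∧u} − X_{t_k∧u})`. -/
def riemannSum {d : ℕ} (N : ℕ) (X : ℝ → EuclideanSpace ℝ (Fin d)) (t : ℕ → ℝ) (u : ℝ) :
    EuclideanSpace ℝ (Fin d × Fin d) :=
  ∑ k ∈ Finset.range N, tp (X (t k)) (X (min (t (k + 1)) u) - X (min (t k) u))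

/-- The left-point Riemann sum `∫_s^u Xⁿ_{s,r} ⊗ dX_r`. -/
def mixedInt {d : ℕ} (N : ℕ) (X : ℝ → EuclideanSpace ℝ (Fin d)) (t : ℕ → ℝ) (s u : ℝ) :
    EuclideanSpace ℝ (Fin d × Fin d) :=
  ∑ i ∈ Finset.range N,
    tp (pcApprox X N t (clamp s u (t i)) - pcApprox X N t s)
      (X (clamp s u (t (i + 1))) - X (clamp s u (t i)))

/-- A control function on the simplex `Δ_T`: nonnegative and superadditive. -/
def IsControl (T : ℝ) (w : ℝ → ℝ → ℝ) : Prop :=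
  (∀ s t, 0 ≤ s → s ≤ t → t ≤ T → 0 ≤ w s t) ∧
  (∀ s u t, 0 ≤ s → s ≤ u → u ≤ t → t ≤ T → w s u + w u t ≤ w s t)

/-- Property (RIE) for a path `X` relative to `p ∈ (2,3)` and a sequence of partitions
`t n 0 ≤ ... ≤ t n (N n)` of `[0,T]` with vanishing mesh. -/
structure PropertyRIE {d : ℕ} (p T : ℝ) (X : ℝ → EuclideanSpace ℝ (Fin d))
    (N : ℕ → ℕ) (t : ℕ → ℕ → ℝ) : Prop where
  mono : ∀ n, Monotone (t n)
  zero : ∀ n, t n 0 = 0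
  top : ∀ n, t n (N n) = T
  mesh : ∀ ε > 0, ∃ m, ∀ n ≥ m, ∀ i < N n, t n (i + 1) - t n i < ε
  unif : TendstoUniformlyOn (fun n s => pcApprox X (N n) (t n) s) X atTop (Set.Icc 0 T)
  riemann : ∃ I : ℝ → EuclideanSpace ℝ (Fin d × Fin d),
    TendstoUniformlyOn (fun n u => riemannSum (N n) X (t n) u) I atTop (Set.Icc 0 T)
  control : ∃ w : ℝ → ℝ → ℝ, IsControl T w ∧
    (∀ s u, 0 ≤ s → s ≤ u → u ≤ T → ‖X u - X s‖ ^ p ≤ w s u) ∧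
    (∀ n, ∀ k ℓ : ℕ, k < ℓ → ℓ ≤ N n →
      ‖riemannSum (N n) X (t n) (t n ℓ) - riemannSum (N n) X (t n) (t n k) -
          tp (X (t n k)) (X (t n ℓ) - X (t n k))‖ ^ (p / 2) ≤ w (t n k) (t n ℓ))

/-! ### Auxiliary lemmas -/

lemma tp_zero_right {d : ℕ} (v : EuclideanSpace ℝ (Fin d)) : tp v 0 = 0 := by
  ext q; simp [tp, tp2]

lemma norm_tp {d : ℕ} (v w : EuclideanSpace ℝ (Fin d)) : ‖tp v w‖ = ‖v‖ * ‖w‖ := by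
  rw [EuclideanSpace.norm_eq, EuclideanSpace.norm_eq, EuclideanSpace.norm_eq,
    ← Real.sqrt_mul (by positivity)]
  congr 1
  rw [Finset.sum_mul_sum, Fintype.sum_prod_type]
  apply Finset.sum_congr rfl
  intro i _
  apply Finset.sum_congr rfl
  intro j _
  simp only [tp, tp2, WithLp.equiv_symm_apply, WithLp.ofLp_toLp, Real.norm_eq_abs, sq_abs]
  ring

lemma sum_Ico_tp {d : ℕ} (Z : ℕ → EuclideanSpace ℝ (Fin d)) (a b : ℕ) (hab : a ≤ b)
    (h : ∀ j, a < j → j < b → Z j = Z b) :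
    ∑ j ∈ Finset.Ico a b, tp (Z j) (Z (j + 1) - Z j) = tp (Z a) (Z b - Z a) := by
  rcases eq_or_lt_of_le hab with rfl | hlt
  · simp [tp_zero_right]
  · rw [Finset.sum_eq_sum_Ico_succ_bot hlt]
    have hZ1 : Z (a + 1) = Z b := by
      rcases eq_or_lt_of_le (Nat.succ_le_of_lt hlt) with he | hl
      · exact congrArg Z he
      · exact h _ (Nat.lt_succ_self a) hl
    have hz : ∑ j ∈ Finset.Ico (a + 1) b, tp (Z j) (Z (j + 1) - Z j) = 0 := by
      apply Finset.sum_eq_zero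
      intro j hj
      rw [Finset.mem_Ico] at hj
      have h1 : Z j = Z b := h j (lt_of_lt_of_le (Nat.lt_succ_self a) hj.1) hj.2
      have h2 : Z (j + 1) = Z b := by
        rcases eq_or_lt_of_le (Nat.succ_le_of_lt hj.2) with he | hl
        · exact congrArg Z he
        · exact h _ (lt_trans (lt_of_lt_of_le (Nat.lt_succ_self a) hj.1) (Nat.lt_succ_self j)) hl
      rw [h1, h2, sub_self, tp_zero_right]
    rw [hz, add_zero, hZ1]

lemma sum_reindex {d : ℕ} (Z : ℕ → EuclideanSpace ℝ (Fin d)) (g : ℕ → ℕ) (K : ℕ)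
    (hmono : Monotone g)
    (hskip : ∀ k, k < K → ∀ j, g k < j → j < g (k + 1) → Z j = Z (g (k + 1))) :
    ∑ k ∈ Finset.range K, tp (Z (g k)) (Z (g (k + 1)) - Z (g k)) =
      ∑ j ∈ Finset.Ico (g 0) (g K), tp (Z j) (Z (j + 1) - Z j) := by
  induction K with
  | zero => simp
  | succ K ih =>
    rw [Finset.sum_range_succ, ih (fun k hk => hskip k (Nat.lt_succ_of_lt hk)),
      ← Finset.sum_Ico_consecutive _ (hmono (Nat.zero_le K)) (hmono (Nat.le_succ K)),
      sum_Ico_tp Z _ _ (hmono (Nat.le_succ K)) (hskip K (Nat.lt_succ_self K))]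

lemma riemannSum_pc_eq {d : ℕ} (X : ℝ → EuclideanSpace ℝ (Fin d)) (I : ℕ) (τ : ℕ → ℝ)
    (hτm : Monotone τ) (hτ0 : τ 0 = 0) (T : ℝ) (hτT : τ I = T)
    (K : ℕ) (r : ℕ → ℝ) (hrm : Monotone r) (hr0 : r 0 = 0) (hrT : r K = T)
    (Hcross : ∀ j, j ≤ I → ∀ k, k < K → r k < τ j → τ j ≤ r (k + 1) → τ j = r (k + 1))
    (u : ℝ) (hu0 : 0 ≤ u) (huT : u ≤ T) :
    riemannSum K (pcApprox X I τ) r u =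
      ∑ j ∈ Finset.Ico (Nat.findGreatest (fun k => τ k ≤ (0 : ℝ)) I)
          (Nat.findGreatest (fun k => τ k ≤ u) I),
        tp (X (τ j)) (X (τ (j + 1)) - X (τ j)) := by
  set ig : ℝ → ℕ := fun x => Nat.findGreatest (fun k => τ k ≤ x) I with hig
  have hig_le : ∀ x, ig x ≤ I := fun x => Nat.findGreatest_le I
  have hig_spec : ∀ x, 0 ≤ x → τ (ig x) ≤ x := by
    intro x hx
    exact Nat.findGreatest_spec (P := fun k => τ k ≤ x) (Nat.zero_le I)
      (show τ 0 ≤ x by rw [hτ0]; exact hx)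
  have hig_ge : ∀ j x, j ≤ I → τ j ≤ x → j ≤ ig x := by
    intro j x hjI hjx
    exact Nat.le_findGreatest hjI hjx
  have hig_mono : ∀ x y, 0 ≤ x → x ≤ y → ig x ≤ ig y := by
    intro x y hx hxy
    exact hig_ge _ _ (hig_le x) (le_trans (hig_spec x hx) hxy)
  have hXn : ∀ x, pcApprox X I τ x = X (τ (ig x)) := fun x => rfl
  set Z : ℕ → EuclideanSpace ℝ (Fin d) := fun j => X (τ j) with hZ
  set g : ℕ → ℕ := fun k => ig (min (r k) u) with hg
  have hr0' : ∀ k, 0 ≤ r k := fun k => hr0 ▸ hrm (Nat.zero_le k)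
  have hmin0 : ∀ k, 0 ≤ min (r k) u := fun k => le_min (hr0' k) hu0
  have hgm : Monotone g := by
    intro k k' hk
    exact hig_mono _ _ (hmin0 k) (min_le_min (hrm hk) le_rfl)
  have step1 : riemannSum K (pcApprox X I τ) r u =
      ∑ k ∈ Finset.range K, tp (Z (g k)) (Z (g (k + 1)) - Z (g k)) := by
    apply Finset.sum_congr rfl
    intro k _
    by_cases h : r k ≤ u
    · simp only [hXn, hZ, hg, min_eq_left h]
    · push_neg at h
      have h1 : min (r k) u = u := min_eq_right h.le
      have h2 : min (r (k + 1)) u = u := min_eq_right (le_trans h.le (hrm (Nat.le_succ k)))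
      simp only [hXn, hZ, hg, h1, h2, sub_self, tp_zero_right]
  rw [step1, sum_reindex Z g K hgm ?hskip]
  · have e0 : g 0 = ig 0 := by simp only [hg, hr0, min_eq_left hu0]
    have eK : g K = ig u := by simp only [hg, hrT, min_eq_right huT]
    rw [e0, eK]
  case hskip =>
    intro k hk j hj1 hj2
    set a := min (r k) u with ha
    set b := min (r (k + 1)) u with hb
    have hb0 : 0 ≤ b := hmin0 (k + 1)
    have hjI : j ≤ I := le_of_lt (lt_of_lt_of_le hj2 (hig_le b))
    have hτjb : τ j ≤ b := le_trans (hτm (le_of_lt hj2)) (hig_spec b hb0)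
    have hτja : a < τ j := by
      by_contra hc
      push_neg at hc
      exact absurd (hig_ge j a hjI hc) (Nat.not_le.mpr hj1)
    have hark : a = r k := by
      rcases le_total (r k) u with h | h
      · exact min_eq_left h
      · exfalso
        have h1 : a = u := min_eq_right h
        have h2 : τ j ≤ a := le_trans hτjb (h1 ▸ min_le_right _ u)
        exact absurd h2 (not_le.mpr hτja)
    have hcross : τ j = r (k + 1) :=
      Hcross j hjI k hk (hark ▸ hτja) (le_trans hτjb (min_le_left _ _))
    have hbj : b ≤ τ j := by rw [hcross]; exact min_le_left _ _
    have hτjb' : τ j = b := le_antisymm hτjb hbj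
    have hτigb : τ (ig b) = τ j := by
      apply le_antisymm
      · rw [hτjb']; exact hig_spec b hb0
      · exact hτm (le_of_lt hj2)
    simp only [hZ]
    rw [hτigb]

/-- if `X` satisfies Property (RIE) relative to `p` and `(𝒫ⁿ)`, then the
piecewise constant discretization `Xⁿ` satisfies Property (RIE) relative to `p` and any
sequence of partitions `(𝒬ᵐ)` refining `𝒫ⁿ` with vanishing mesh. -/
theorem pcApprox_satisfies_RIE (d : ℕ) (p T : ℝ) (hp2 : 2 < p) (hp3 : p < 3) (hT : 0 < T)
    (X : ℝ → EuclideanSpace ℝ (Fin d)) (N : ℕ → ℕ) (t : ℕ → ℕ → ℝ)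
    (hX : PropertyRIE p T X N t) (n : ℕ)
    (M : ℕ → ℕ) (q : ℕ → ℕ → ℝ)
    (hqmono : ∀ m, Monotone (q m)) (hq0 : ∀ m, q m 0 = 0) (hqT : ∀ m, q m (M m) = T)
    (hqmesh : ∀ ε > 0, ∃ m₀, ∀ m ≥ m₀, ∀ i < M m, q m (i + 1) - q m i < ε)
    (hsub : ∀ m, ∀ i ≤ N n, ∃ j ≤ M m, q m j = t n i) :
    PropertyRIE p T (pcApprox X (N n) (t n)) M q := by
  set I := N n with hIdef
  set τ := t n with hτdef
  set Xn := pcApprox X I τ with hXndef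
  have hτm : Monotone τ := hX.mono n
  have hτ0 : τ 0 = 0 := hX.zero n
  have hτT : τ I = T := hX.top n
  set ig : ℝ → ℕ := fun x => Nat.findGreatest (fun k => τ k ≤ x) I with hig
  have hig_le : ∀ x, ig x ≤ I := fun x => Nat.findGreatest_le I
  have hig_spec : ∀ x, 0 ≤ x → τ (ig x) ≤ x := by
    intro x hx
    exact Nat.findGreatest_spec (P := fun k => τ k ≤ x) (Nat.zero_le I)
      (show τ 0 ≤ x by rw [hτ0]; exact hx)
  have hig_ge : ∀ j x, j ≤ I → τ j ≤ x → j ≤ ig x := fun j x hjI hjx =>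
    Nat.le_findGreatest hjI hjx
  have hig_mono : ∀ x y, 0 ≤ x → x ≤ y → ig x ≤ ig y := fun x y hx hxy =>
    hig_ge _ _ (hig_le x) (le_trans (hig_spec x hx) hxy)
  have hXnx : ∀ x, Xn x = X (τ (ig x)) := fun x => rfl
  have hq0' : ∀ m k, 0 ≤ q m k := fun m k => (hq0 m) ▸ hqmono m (Nat.zero_le k)
  have hqT' : ∀ m k, k ≤ M m → q m k ≤ T := fun m k hk => (hqT m) ▸ hqmono m hk
  -- crossing property for the refining partitions
  have Hq : ∀ m, ∀ j, j ≤ I → ∀ k, k < M m → q m k < τ j → τ j ≤ q m (k + 1) →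
      τ j = q m (k + 1) := by
    intro m j hjI k hk h1 h2
    obtain ⟨j', hj'M, hj'⟩ := hsub m j hjI
    have hkj' : k < j' := by
      by_contra hc
      push_neg at hc
      have h3 := hqmono m hc
      rw [hj'] at h3
      exact absurd h3 (not_le.mpr h1)
    have h4 : q m (k + 1) ≤ q m j' := hqmono m hkj'
    rw [hj'] at h4
    exact le_antisymm h2 h4
  have Hτ : ∀ j, j ≤ I → ∀ k, k < I → τ k < τ j → τ j ≤ τ (k + 1) → τ j = τ (k + 1) := by
    intro j hjI k hk h1 h2
    have h3 : k < j := by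
      by_contra hc
      push_neg at hc
      exact absurd (hτm hc) (not_le.mpr h1)
    exact le_antisymm h2 (hτm h3)
  have hkeyq : ∀ m u, 0 ≤ u → u ≤ T → riemannSum (M m) Xn (q m) u =
      ∑ j ∈ Finset.Ico (ig 0) (ig u), tp (X (τ j)) (X (τ (j + 1)) - X (τ j)) :=
    fun m u h0 hT' => riemannSum_pc_eq X I τ hτm hτ0 T hτT (M m) (q m) (hqmono m)
      (hq0 m) (hqT m) (Hq m) u h0 hT'
  have hkeyτ : ∀ u, 0 ≤ u → u ≤ T → riemannSum I Xn τ u =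
      ∑ j ∈ Finset.Ico (ig 0) (ig u), tp (X (τ j)) (X (τ (j + 1)) - X (τ j)) :=
    fun u h0 hT' => riemannSum_pc_eq X I τ hτm hτ0 T hτT I τ hτm hτ0 hτT Hτ u h0 hT'
  -- the discretization of Xn along q m is Xn itself
  have hpc : ∀ m, ∀ x, 0 ≤ x → pcApprox Xn (M m) (q m) x = Xn x := by
    intro m x hx
    have h1 : pcApprox Xn (M m) (q m) x =
        Xn (q m (Nat.findGreatest (fun j => q m j ≤ x) (M m))) := rfl
    set jg := Nat.findGreatest (fun j => q m j ≤ x) (M m) with hjg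
    have hspec : q m jg ≤ x := Nat.findGreatest_spec (P := fun j => q m j ≤ x)
      (Nat.zero_le (M m)) (show q m 0 ≤ x by rw [hq0 m]; exact hx)
    have higeq : ig (q m jg) = ig x := by
      apply le_antisymm
      · exact hig_mono _ _ (hq0' m jg) hspec
      · obtain ⟨j', hj'M, hj'⟩ := hsub m (ig x) (hig_le x)
        have h2 : q m j' ≤ x := by rw [hj']; exact hig_spec x hx
        have h3 : j' ≤ jg := Nat.le_findGreatest hj'M h2
        have h4 : τ (ig x) ≤ q m jg := by rw [← hj']; exact hqmono m h3
        exact hig_ge _ _ (hig_le x) h4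
    rw [h1, hXnx, higeq, ← hXnx]
  refine ⟨hqmono, hq0, hqT, hqmesh, ?_, ?_, ?_⟩
  · -- unif
    intro U hU
    filter_upwards with m x hx
    rw [hpc m x hx.1]
    exact refl_mem_uniformity hU
  · -- riemann
    refine ⟨fun u => riemannSum I Xn τ u, ?_⟩
    intro U hU
    filter_upwards with m x hx
    rw [show riemannSum (M m) Xn (q m) x = riemannSum I Xn τ x from
      (hkeyq m x hx.1 hx.2).trans (hkeyτ x hx.1 hx.2).symm]
    exact refl_mem_uniformity hU
  · -- control
    set B := ∑ j ∈ Finset.range (I + 1), ‖X (τ j)‖ with hB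
    have hB0 : 0 ≤ B := Finset.sum_nonneg fun j _ => norm_nonneg _
    have hBj : ∀ j, j ≤ I → ‖X (τ j)‖ ≤ B := by
      intro j hj
      exact Finset.single_le_sum (f := fun j => ‖X (τ j)‖) (fun i _ => norm_nonneg _)
        (Finset.mem_range.mpr (Nat.lt_succ_of_le hj))
    have hXnB : ∀ x, ‖Xn x‖ ≤ B := by
      intro x
      rw [hXnx]
      exact hBj _ (hig_le x)
    set D : ℝ := ((I : ℝ) + 1) * (B * (2 * B)) + B * (2 * B) + 2 * B with hD
    have hD0 : 0 ≤ D := by positivity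
    set K₀ : ℝ := D ^ p + D ^ (p / 2) with hK₀
    have hp0 : (0 : ℝ) ≤ p := by linarith
    have hp20 : (0 : ℝ) ≤ p / 2 := by linarith
    have hK₀0 : 0 ≤ K₀ := add_nonneg (Real.rpow_nonneg hD0 _) (Real.rpow_nonneg hD0 _)
    have hK₁ : ∀ x : ℝ, 0 ≤ x → x ≤ D → x ^ p ≤ K₀ := fun x hx hxD =>
      (Real.rpow_le_rpow hx hxD hp0).trans (le_add_of_nonneg_right (Real.rpow_nonneg hD0 _))
    have hK₂ : ∀ x : ℝ, 0 ≤ x → x ≤ D → x ^ (p / 2) ≤ K₀ := fun x hx hxD =>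
      (Real.rpow_le_rpow hx hxD hp20).trans (le_add_of_nonneg_left (Real.rpow_nonneg hD0 _))
    set F : ℝ → ℝ → Finset ℕ :=
      fun s u => (Finset.range (I + 1)).filter (fun j => s < τ j ∧ τ j ≤ u) with hF
    have hempty : ∀ s u, 0 ≤ s → s ≤ u → F s u = ∅ → ig u = ig s := by
      intro s u hs hsu hem
      apply le_antisymm
      · apply hig_ge _ _ (hig_le u)
        by_contra hc
        push_neg at hc
        have hmem : ig u ∈ F s u := by
          simp only [hF, Finset.mem_filter, Finset.mem_range]
          exact ⟨Nat.lt_succ_of_le (hig_le u), hc, hig_spec u (le_trans hs hsu)⟩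
        rw [hem] at hmem
        exact absurd hmem (Finset.notMem_empty _)
      · exact hig_mono _ _ hs hsu
    have hcard1 : ∀ s u : ℝ, F s u ≠ ∅ → (1 : ℝ) ≤ (F s u).card := by
      intro s u hne
      have := Finset.card_pos.mpr (Finset.nonempty_iff_ne_empty.mpr hne)
      exact_mod_cast this
    refine ⟨fun s u => K₀ * (F s u).card, ⟨?_, ?_⟩, ?_, ?_⟩
    · intro s u _ _ _
      exact mul_nonneg hK₀0 (Nat.cast_nonneg _)
    · intro s u v hs hsu huv hvT
      have hunion : F s u ∪ F u v = F s v := by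
        ext j
        simp only [hF, Finset.mem_union, Finset.mem_filter, Finset.mem_range]
        constructor
        · rintro (⟨hj, h1, h2⟩ | ⟨hj, h1, h2⟩)
          · exact ⟨hj, h1, le_trans h2 huv⟩
          · exact ⟨hj, lt_of_le_of_lt hsu h1, h2⟩
        · rintro ⟨hj, h1, h2⟩
          rcases le_or_gt (τ j) u with h | h
          · exact Or.inl ⟨hj, h1, h⟩
          · exact Or.inr ⟨hj, h, h2⟩
      have hdisj : Disjoint (F s u) (F u v) := by
        rw [Finset.disjoint_left]
        intro j h1 h2
        simp only [hF, Finset.mem_filter] at h1 h2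
        exact absurd h2.2.1 (not_lt.mpr h1.2.2)
      have hcard : (F s u).card + (F u v).card = (F s v).card := by
        rw [← hunion, Finset.card_union_of_disjoint hdisj]
      show K₀ * ((F s u).card : ℝ) + K₀ * ((F u v).card : ℝ) ≤ K₀ * ((F s v).card : ℝ)
      apply le_of_eq
      rw [← hcard]
      push_cast
      ring
    · -- increment bound
      intro s u hs hsu huT'
      show ‖Xn u - Xn s‖ ^ p ≤ K₀ * ((F s u).card : ℝ)
      by_cases hem : F s u = ∅
      · have higu : ig u = ig s := hempty s u hs hsu hem
        have h0 : Xn u - Xn s = 0 := by rw [hXnx, hXnx, higu, sub_self]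
        rw [h0, norm_zero, Real.zero_rpow (ne_of_gt (by linarith : (0:ℝ) < p)), hem]
        simp
      · have hb : ‖Xn u - Xn s‖ ≤ D := by
          have h1 := norm_sub_le (Xn u) (Xn s)
          have h2 := hXnB u
          have h3 := hXnB s
          have h4 : (0 : ℝ) ≤ ((I : ℝ) + 1) * (B * (2 * B)) + B * (2 * B) := by positivity
          rw [hD]; linarith
        calc ‖Xn u - Xn s‖ ^ p ≤ K₀ := hK₁ _ (norm_nonneg _) hb
          _ = K₀ * 1 := (mul_one _).symm
          _ ≤ K₀ * (F s u).card := mul_le_mul_of_nonneg_left (hcard1 s u hem) hK₀0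
    · -- Riemann-sum remainder bound
      intro m k ℓ hkl hlM
      show ‖riemannSum (M m) Xn (q m) (q m ℓ) - riemannSum (M m) Xn (q m) (q m k) -
          tp (Xn (q m k)) (Xn (q m ℓ) - Xn (q m k))‖ ^ (p / 2) ≤
        K₀ * ((F (q m k) (q m ℓ)).card : ℝ)
      have hs0 : 0 ≤ q m k := hq0' m k
      have hsu : q m k ≤ q m ℓ := hqmono m (le_of_lt hkl)
      have huT' : q m ℓ ≤ T := hqT' m ℓ hlM
      have hsT : q m k ≤ T := le_trans hsu huT'
      have hu0 : 0 ≤ q m ℓ := le_trans hs0 hsu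
      have h01 : ig 0 ≤ ig (q m k) := hig_mono 0 (q m k) le_rfl hs0
      have h12 : ig (q m k) ≤ ig (q m ℓ) := hig_mono _ _ hs0 hsu
      have hsplit : riemannSum (M m) Xn (q m) (q m ℓ) - riemannSum (M m) Xn (q m) (q m k) =
          ∑ j ∈ Finset.Ico (ig (q m k)) (ig (q m ℓ)),
            tp (X (τ j)) (X (τ (j + 1)) - X (τ j)) := by
        rw [hkeyq m (q m ℓ) hu0 huT', hkeyq m (q m k) hs0 hsT,
          ← Finset.sum_Ico_consecutive _ h01 h12]
        abel
      rw [hsplit]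
      by_cases hem : F (q m k) (q m ℓ) = ∅
      · have higu : ig (q m ℓ) = ig (q m k) := hempty _ _ hs0 hsu hem
        have h0 : Xn (q m ℓ) - Xn (q m k) = 0 := by rw [hXnx, hXnx, higu, sub_self]
        rw [higu, Finset.Ico_self, Finset.sum_empty, h0, tp_zero_right, sub_zero, norm_zero,
          Real.zero_rpow (ne_of_gt (by linarith : (0:ℝ) < p / 2)), hem]
        simp
      · have hterm : ∀ j ∈ Finset.Ico (ig (q m k)) (ig (q m ℓ)),
            ‖tp (X (τ j)) (X (τ (j + 1)) - X (τ j))‖ ≤ B * (2 * B) := by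
          intro j hj
          have hj2 : j + 1 ≤ I :=
            Nat.succ_le_of_lt (lt_of_lt_of_le (Finset.mem_Ico.mp hj).2 (hig_le _))
          have hj1 : j ≤ I := le_trans (Nat.le_succ j) hj2
          rw [norm_tp]
          have ha := hBj j hj1
          have hbb : ‖X (τ (j + 1)) - X (τ j)‖ ≤ 2 * B := by
            have h5 := norm_sub_le (X (τ (j + 1))) (X (τ j))
            have h6 := hBj (j + 1) hj2
            linarith
          exact mul_le_mul ha hbb (norm_nonneg _) hB0
        have hsum : ‖∑ j ∈ Finset.Ico (ig (q m k)) (ig (q m ℓ)),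
            tp (X (τ j)) (X (τ (j + 1)) - X (τ j))‖ ≤ ((I : ℝ) + 1) * (B * (2 * B)) := by
          calc ‖∑ j ∈ Finset.Ico (ig (q m k)) (ig (q m ℓ)),
              tp (X (τ j)) (X (τ (j + 1)) - X (τ j))‖
              ≤ ∑ j ∈ Finset.Ico (ig (q m k)) (ig (q m ℓ)),
                ‖tp (X (τ j)) (X (τ (j + 1)) - X (τ j))‖ := norm_sum_le (Finset.Ico (ig (q m k)) (ig (q m ℓ)))
                  (fun j => tp (X (τ j)) (X (τ (j + 1)) - X (τ j)))
            _ ≤ ∑ _j ∈ Finset.Ico (ig (q m k)) (ig (q m ℓ)), B * (2 * B) :=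
                Finset.sum_le_sum hterm
            _ = ((Finset.Ico (ig (q m k)) (ig (q m ℓ))).card : ℝ) * (B * (2 * B)) := by
                rw [Finset.sum_const, nsmul_eq_mul]
            _ ≤ ((I : ℝ) + 1) * (B * (2 * B)) := by
                apply mul_le_mul_of_nonneg_right _ (by positivity)
                have hc : (Finset.Ico (ig (q m k)) (ig (q m ℓ))).card ≤ I + 1 := by
                  rw [Nat.card_Ico]
                  exact le_trans (Nat.sub_le _ _) (le_trans (hig_le _) (Nat.le_succ I))
                exact_mod_cast hc
        have htp : ‖tp (Xn (q m k)) (Xn (q m ℓ) - Xn (q m k))‖ ≤ B * (2 * B) := by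
          rw [norm_tp]
          have h5 := norm_sub_le (Xn (q m ℓ)) (Xn (q m k))
          have h6 := hXnB (q m ℓ)
          have h7 := hXnB (q m k)
          exact mul_le_mul (hXnB _) (by linarith) (norm_nonneg _) hB0
        have hRD : ‖∑ j ∈ Finset.Ico (ig (q m k)) (ig (q m ℓ)),
            tp (X (τ j)) (X (τ (j + 1)) - X (τ j)) -
            tp (Xn (q m k)) (Xn (q m ℓ) - Xn (q m k))‖ ≤ D := by
          have h5 := norm_sub_le (∑ j ∈ Finset.Ico (ig (q m k)) (ig (q m ℓ)),
            tp (X (τ j)) (X (τ (j + 1)) - X (τ j)))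
            (tp (Xn (q m k)) (Xn (q m ℓ) - Xn (q m k)))
          rw [hD]
          have hB20 : (0 : ℝ) ≤ 2 * B := by positivity
          linarith
        calc ‖∑ j ∈ Finset.Ico (ig (q m k)) (ig (q m ℓ)),
              tp (X (τ j)) (X (τ (j + 1)) - X (τ j)) -
              tp (Xn (q m k)) (Xn (q m ℓ) - Xn (q m k))‖ ^ (p / 2)
            ≤ K₀ := hK₂ _ (norm_nonneg _) hRD
          _ = K₀ * 1 := (mul_one _).symm
          _ ≤ K₀ * (F (q m k) (q m ℓ)).card :=
              mul_le_mul_of_nonneg_left (hcard1 _ _ hem) hK₀0
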